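/- Let r ≥ 1 and let β be a nonzero complex number. Then the pair of (r+1)×r complex matrices ((F_r ⊕ [0]) + β·E_{r,r}, K_r ⊕ [1]), where [0] and [1] are 1×1 blocks, is equivalent to the pair (F_{r+1}, K_{r+1}). -/

import Mathlib

open Matrix

noncomputable section

/-- The `M × N` complex matrix obtained by placing the matrix `A` with its top-left corner
at (1-based) position `(ri+1, ci+1)` (i.e. with row offset `ri` and column offset `ci`),
with all other entries zero.  Block-diagonal direct sums of (possibly rectangular) matrices
are expressed as sums of such placements along the diagonal. -/
def place {M N m n : ℕ} (ri ci : ℕ) (A : Matrix (Fin m) (Fin n) ℂ) :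
    Matrix (Fin M) (Fin N) ℂ := fun i j =>
  if hi : ri ≤ (i : ℕ) ∧ (i : ℕ) < ri + m then
    if hj : ci ≤ (j : ℕ) ∧ (j : ℕ) < ci + n then
      A ⟨(i : ℕ) - ri, by omega⟩ ⟨(j : ℕ) - ci, by omega⟩
    else 0
  else 0

/-- The `r × (r-1)` matrix `F_r` with ones on the main diagonal and zeros elsewhere. -/
def MatF (r : ℕ) : Matrix (Fin r) (Fin (r - 1)) ℂ :=
  fun i j => if (i : ℕ) = (j : ℕ) then 1 else 0

/-- The `r × (r-1)` matrix `K_r` with ones on the subdiagonal and zeros elsewhere. -/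
def MatK (r : ℕ) : Matrix (Fin r) (Fin (r - 1)) ℂ :=
  fun i j => if (i : ℕ) = (j : ℕ) + 1 then 1 else 0

/-- The matrix unit `E_{a,b}` (1-based indices): entry `(a,b)` is `1`, all others `0`. -/
def Estd {M N : ℕ} (a b : ℕ) : Matrix (Fin M) (Fin N) ℂ :=
  fun i j => if (i : ℕ) + 1 = a ∧ (j : ℕ) + 1 = b then 1 else 0

/-- Two pairs `(A₁, A₂)` and `(B₁, B₂)` of `m × n` complex matrices are equivalent if
`B₁ = R * A₁ * S` and `B₂ = R * A₂ * S` for some invertible `R`, `S`. -/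
def PairEquiv {m n : ℕ} (A₁ A₂ B₁ B₂ : Matrix (Fin m) (Fin n) ℂ) : Prop :=
  ∃ (R : Matrix (Fin m) (Fin m) ℂ) (S : Matrix (Fin n) (Fin n) ℂ),
    IsUnit R ∧ IsUnit S ∧ B₁ = R * A₁ * S ∧ B₂ = R * A₂ * S

lemma one_by_one_entry (c : ℂ) (a b : Fin 1) : !![c] a b = c := by
  fin_cases a; fin_cases b; rfl

theorem bif_tri_r_infty (r : ℕ) (hr : 1 ≤ r) (β : ℂ) (hβ : β ≠ 0) :
    PairEquiv
      (place 0 0 (MatF r) + place r (r - 1) !![(0 : ℂ)] + β • Estd r r :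
        Matrix (Fin (r + 1)) (Fin r) ℂ)
      (place 0 0 (MatK r) + place r (r - 1) !![(1 : ℂ)])
      (MatF (r + 1))
      (MatK (r + 1)) := by
  refine ⟨Matrix.diagonal (fun i => if (i : ℕ) = r then β else 1),
    Matrix.diagonal (fun j => if (j : ℕ) = r - 1 then β⁻¹ else 1), ?_, ?_, ?_, ?_⟩
  · rw [Matrix.isUnit_iff_isUnit_det, Matrix.det_diagonal, isUnit_iff_ne_zero,
      Finset.prod_ne_zero_iff]
    intro i _
    split_ifs <;> simp [hβ]
  · rw [Matrix.isUnit_iff_isUnit_det, Matrix.det_diagonal, isUnit_iff_ne_zero,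
      Finset.prod_ne_zero_iff]
    intro i _
    split_ifs <;> simp [hβ]
  · ext ⟨i, hi⟩ ⟨j, hj⟩
    rw [Matrix.mul_diagonal, Matrix.diagonal_mul]
    simp only [place, MatF, Estd, Matrix.add_apply, Matrix.smul_apply, smul_eq_mul,
      one_by_one_entry, Fin.val_mk, Nat.sub_zero]
    split_ifs <;>
      first
        | omega
        | (norm_num; done)
        | (field_simp; done)
        | (subst_vars; simp [Matrix.of_apply, Fin.fin_one_eq_zero, hβ]; done)
  · ext ⟨i, hi⟩ ⟨j, hj⟩
    rw [Matrix.mul_diagonal, Matrix.diagonal_mul]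
    simp only [place, MatK, Estd, Matrix.add_apply, Matrix.smul_apply, smul_eq_mul,
      one_by_one_entry, Fin.val_mk, Nat.sub_zero]
    split_ifs <;>
      first
        | omega
        | (norm_num; done)
        | (field_simp; done)
        | (subst_vars; simp [Matrix.of_apply, Fin.fin_one_eq_zero, hβ]; done)
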